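/- For all n ≥ 4, φ(n) < 17·(φ(n-1))². -/

import Mathlib

/-- `F n = (a n ·, b n ·, φ n)` from the recursive construction;
    `φ 1 := 1` by convention. -/
def F : ℕ → ((ℕ → ℚ) × (ℕ → ℚ) × ℚ)
  | 0 => (fun _ => 0, fun _ => 0, 1)
  | 1 => (fun j => if j = 1 then 1 else 0, fun j => if j = 1 then 1 else 0, 1)
  | (n+2) =>
      let p := F (n+1)
      let th : ℚ := 3 * p.1 (n+1)
      let ph : ℚ := if n = 0 then 4
        else 4 * ∑ j ∈ Finset.Icc 1 (n+1), (th * p.2.1 j - 3 * p.1 j)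
      (fun j => if j = n+2 then ph else 4 * p.1 j,
       fun j => if j = n+2 then 1 else (1 + th) * p.2.1 j,
       ph)

/-- coefficient `a(n,j)` -/
def a (n j : ℕ) : ℚ := (F n).1 j
/-- coefficient `b(n,j)` -/
def b (n j : ℕ) : ℚ := (F n).2.1 j
/-- `φ(n)` -/
def phi (n : ℕ) : ℚ := (F n).2.2
/-- `θ(n) = 3·a(n-1,n-1)` -/
def theta (n : ℕ) : ℚ := 3 * a (n-1) (n-1)

def S (n : ℕ) : ℚ := ∑ j ∈ Finset.Icc 1 n, b n j
def T (n : ℕ) : ℚ := ∑ j ∈ Finset.Icc 1 n, a n j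

lemma a_succ (n j : ℕ) : a (n+2) j = if j = n+2 then phi (n+2) else 4 * a (n+1) j := by
  simp only [a, phi, F]

lemma b_succ (n j : ℕ) :
    b (n+2) j = if j = n+2 then 1 else (1 + 3 * a (n+1) (n+1)) * b (n+1) j := by
  simp only [a, b, F]

lemma a_diag (n : ℕ) : a (n+1) (n+1) = phi (n+1) := by
  cases n with
  | zero => decide
  | succ m => rw [a_succ, if_pos rfl]

lemma phi_succ (n : ℕ) (hn : 1 ≤ n) :
    phi (n+2) = 12 * (phi (n+1) * S (n+1) - T (n+1)) := by
  have h0 : n ≠ 0 := by omega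
  have : phi (n+2) = 4 * ∑ j ∈ Finset.Icc 1 (n+1),
      (3 * a (n+1) (n+1) * b (n+1) j - 3 * a (n+1) j) := by
    simp only [phi, a, b, F, if_neg h0]
  rw [this, a_diag, S, T, Finset.sum_sub_distrib,
    ← Finset.mul_sum (Finset.Icc 1 (n+1)) (fun j => b (n+1) j) (3 * phi (n+1)),
    ← Finset.mul_sum (Finset.Icc 1 (n+1)) (fun j => a (n+1) j) 3]
  ring

lemma Icc_succ (n : ℕ) : Finset.Icc 1 (n+2) = insert (n+2) (Finset.Icc 1 (n+1)) := by
  ext j; simp [Finset.mem_Icc, Finset.mem_insert]; omega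

lemma S_succ (n : ℕ) : S (n+2) = (1 + 3 * phi (n+1)) * S (n+1) + 1 := by
  rw [S, Icc_succ, Finset.sum_insert (by simp)]
  rw [b_succ, if_pos rfl]
  have : ∀ j ∈ Finset.Icc 1 (n+1), b (n+2) j = (1 + 3 * phi (n+1)) * b (n+1) j := by
    intro j hj
    simp only [Finset.mem_Icc] at hj
    rw [b_succ, if_neg (by omega), a_diag]
  rw [Finset.sum_congr rfl this, ← Finset.mul_sum, S]
  ring

lemma T_succ (n : ℕ) : T (n+2) = 4 * T (n+1) + phi (n+2) := by
  rw [T, Icc_succ, Finset.sum_insert (by simp)]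
  rw [a_succ, if_pos rfl]
  have : ∀ j ∈ Finset.Icc 1 (n+1), a (n+2) j = 4 * a (n+1) j := by
    intro j hj
    simp only [Finset.mem_Icc] at hj
    rw [a_succ, if_neg (by omega)]
  rw [Finset.sum_congr rfl this, ← Finset.mul_sum, T]
  ring

lemma base2 : phi 2 = 4 ∧ S 2 = 5 ∧ T 2 = 8 := by
  refine ⟨by decide, ?_, ?_⟩
  · rw [S, show Finset.Icc 1 2 = {1,2} by decide, Finset.sum_pair (by norm_num)]
    norm_num [b, F]
  · rw [T, show Finset.Icc 1 2 = {1,2} by decide, Finset.sum_pair (by norm_num)]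
    norm_num [a, F]

lemma inv : ∀ n, 2 ≤ n → 4 ≤ phi n ∧ 5 ≤ S n ∧ 1 ≤ T n ∧ T n ≤ 2 * phi n ∧ 12 * S n ≤ 17 * phi n := by
  intro n hn
  induction n, hn using Nat.le_induction with
  | base => obtain ⟨h1, h2, h3⟩ := base2; rw [h1, h2, h3]; norm_num
  | succ n hn ih =>
    obtain ⟨m, rfl⟩ : ∃ m, n = m + 2 := ⟨n - 2, by omega⟩
    obtain ⟨hphi, hS, hT1, hT2, hST⟩ := ih
    have hp := phi_succ (m+1) (by omega)
    have hs := S_succ (m+1)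
    have ht := T_succ (m+1)
    have hphi' : 36 * phi (m+2) ≤ phi (m+3) := by nlinarith
    refine ⟨by nlinarith, by nlinarith, by nlinarith, by nlinarith, ?_⟩
    nlinarith [mul_le_mul hST (le_of_lt (by nlinarith : S (m+2) < S (m+3))) (by nlinarith) (by nlinarith : (0:ℚ) ≤ 17 * phi (m+2))]

theorem phi_upper_growth (n : ℕ) (hn : 4 ≤ n) : phi n < 17 * (phi (n-1))^2 := by
  obtain ⟨k, rfl⟩ : ∃ k, n = k + 4 := ⟨n - 4, by omega⟩
  have h1 : k + 4 - 1 = k + 3 := by omega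
  rw [h1]
  obtain ⟨hphi, hS, hT1, hT2, hST⟩ := inv (k+3) (by omega)
  have hp := phi_succ (k+2) (by omega)
  have : phi (k+4) = phi (k+2+2) := by ring_nf
  rw [this, hp]
  nlinarith
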